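/- Let α be a finite alphabet and let L = E·G∗·H where E is a union-free language and G, H are regular languages over α with G ≠ ∅ and G ≠ {ε}. Then there exist a finite language E′ and regular languages G′, H′ over α with G′ ≠ ∅ and G′ ≠ {ε} such that L = E′·G′∗·H′. -/

import Mathlib

open Language Computability

universe u

variable {α : Type}

/-- The n-fold repetition (power) of a word. -/
def wordPow (y : List α) : ℕ → List α
  | 0 => []
  | n + 1 => y ++ wordPow y n

/-- A star language: the Kleene star of some regular language. -/
def IsStarLang (L : Language α) : Prop :=
  ∃ H : Language α, H.IsRegular ∧ L = H∗

/-- A left-sided comet. -/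
def IsLeftComet (L : Language α) : Prop :=
  ∃ E G : Language α, E.IsRegular ∧ G.IsRegular ∧ G ≠ 0 ∧ G ≠ 1 ∧ L = E * G∗

/-- A right-sided comet. -/
def IsRightComet (L : Language α) : Prop :=
  ∃ G H : Language α, G.IsRegular ∧ H.IsRegular ∧ G ≠ 0 ∧ G ≠ 1 ∧ L = G∗ * H

/-- A two-sided comet. -/
def IsTwoComet (L : Language α) : Prop :=
  ∃ E G H : Language α, E.IsRegular ∧ G.IsRegular ∧ H.IsRegular ∧
    G ≠ 0 ∧ G ≠ 1 ∧ L = E * G∗ * H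

/-- A regular expression is union-free if it is built from the atoms `0` (empty language)
and single letters using only concatenation and Kleene star. -/
def RegularExpression.UnionFree : RegularExpression α → Prop
  | RegularExpression.zero => True
  | RegularExpression.epsilon => False
  | RegularExpression.char _ => True
  | RegularExpression.plus _ _ => False
  | RegularExpression.comp r s => r.UnionFree ∧ s.UnionFree
  | RegularExpression.star r => r.UnionFree

/-- A union-free language: the language of a union-free regular expression. -/
def IsUnionFree (L : Language α) : Prop :=
  ∃ r : RegularExpression α, r.UnionFree ∧ r.matches' = L

/-- A monoidal language. -/
def IsMonoidal (L : Language α) : Prop := L = (⊤ : Language α)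

/-- The language of one-letter words with letters from `X`. -/
def lettersLang (X : Set α) : Language α := {w : List α | ∃ a ∈ X, w = [a]}

/-- A combinational language: `⊤ · X` for a set `X` of one-letter words. -/
def IsCombinational (L : Language α) : Prop :=
  ∃ X : Set α, L = (⊤ : Language α) * lettersLang X

/-- A symmetric definite language: `E · ⊤ · H` with `E, H` regular. -/
def IsSymDef (L : Language α) : Prop :=
  ∃ E H : Language α, E.IsRegular ∧ H.IsRegular ∧ L = E * (⊤ : Language α) * H

/-- A nilpotent language: finite or with finite complement. -/
def IsNilpotentLang (L : Language α) : Prop := L.Finite ∨ (Lᶜ : Language α).Finite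

/-- A definite language: `A ∪ ⊤ · B` with `A, B` finite. -/
def IsDefinite (L : Language α) : Prop :=
  ∃ A B : Language α, A.Finite ∧ B.Finite ∧ L = A + (⊤ : Language α) * B  -- `+` of languages is union

/-- An ordered language: accepted by a DFA with linearly ordered state set
whose transition maps are all monotone. -/
def IsOrdered (L : Language α) : Prop :=
  ∃ (σ : Type) (_ : Fintype σ) (_ : LinearOrder σ) (M : DFA α σ),
    (∀ a : α, Monotone fun q => M.step q a) ∧ M.accepts = L

/-- The non-counting property. -/
def HasNonCounting (L : Language α) : Prop :=
  ∃ k : ℕ, 1 ≤ k ∧ ∀ x y z : List α,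
    (x ++ wordPow y k ++ z ∈ L ↔ x ++ wordPow y (k + 1) ++ z ∈ L)

/-- A non-counting (star-free) regular language. -/
def IsNonCounting (L : Language α) : Prop := L.IsRegular ∧ HasNonCounting L

/-- The power-separating property. -/
def HasPowerSep (L : Language α) : Prop :=
  ∃ m : ℕ, 1 ≤ m ∧ ∀ x : List α,
    (∀ n, m ≤ n → wordPow x n ∉ L) ∨ (∀ n, m ≤ n → wordPow x n ∈ L)

/-- A power-separating regular language. -/
def IsPowerSep (L : Language α) : Prop := L.IsRegular ∧ HasPowerSep L

/-- A suffix-closed (regular) language. -/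
def IsSuffixClosed (L : Language α) : Prop :=
  L.IsRegular ∧ ∀ x y : List α, x ++ y ∈ L → y ∈ L

/-- A circular (regular) language. -/
def IsCircular (L : Language α) : Prop :=
  L.IsRegular ∧ ∀ u v : List α, u ++ v ∈ L → v ++ u ∈ L

/-- A commutative (regular) language. -/
def IsCommutative (L : Language α) : Prop :=
  L.IsRegular ∧ ∀ w ∈ L, ∀ v : List α, w.Perm v → v ∈ L

/-- The reversal of a language. -/
def Reversal (L : Language α) : Language α := {w : List α | ∃ v ∈ L, w = v.reverse}

/-- Two families of languages are incomparable if neither is contained in the other. -/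
def Incomparable (P Q : Language α → Prop) : Prop :=
  (∃ L : Language α, P L ∧ ¬ Q L) ∧ (∃ L : Language α, Q L ∧ ¬ P L)

/-- A finite language. -/
def IsFiniteLang (L : Language α) : Prop := L.Finite

namespace CometAux

variable {σ σ₁ σ₂ : Type}

/-- NFA acceptance gives regularity. -/
lemma nfa_isRegular {σ : Type} [Fintype σ] (N : NFA α σ) : N.accepts.IsRegular :=
  ⟨Set σ, Fintype.ofFinite _, N.toDFA, N.toDFA_correct⟩

lemma isRegular_zero : (0 : Language α).IsRegular := by
  refine ⟨Unit, inferInstance, ⟨fun _ _ => (), (), ∅⟩, ?_⟩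
  ext w
  simp [DFA.mem_accepts]

lemma foldl_const_false (t : List α) : List.foldl (fun _ _ => false) false t = false := by
  induction t with
  | nil => rfl
  | cons a t ih => simpa using ih

lemma isRegular_one : (1 : Language α).IsRegular := by
  refine ⟨Bool, inferInstance, ⟨fun _ _ => false, true, {true}⟩, ?_⟩
  ext w
  cases w with
  | nil =>
    simp only [DFA.mem_accepts, DFA.eval, DFA.evalFrom, List.foldl_nil, Language.one_def]
    exact iff_of_true rfl rfl
  | cons a t =>
    simp only [DFA.mem_accepts, DFA.eval, DFA.evalFrom, List.foldl_cons, foldl_const_false,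
      Language.one_def]
    exact iff_of_false (by simp) (fun h => List.cons_ne_nil a t (show a :: t = [] from h))

lemma isRegular_add {L M : Language α} (hL : L.IsRegular) (hM : M.IsRegular) :
    (L + M).IsRegular := by
  obtain ⟨σ₁, _, M₁, rfl⟩ := hL
  obtain ⟨σ₂, _, M₂, rfl⟩ := hM
  refine ⟨σ₁ × σ₂, inferInstance,
    ⟨fun q a => (M₁.step q.1 a, M₂.step q.2 a), (M₁.start, M₂.start),
      {q | q.1 ∈ M₁.accept ∨ q.2 ∈ M₂.accept}⟩, ?_⟩
  have key : ∀ (w : List α) (p : σ₁ × σ₂),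
      (DFA.mk (fun q a => (M₁.step q.1 a, M₂.step q.2 a)) (M₁.start, M₂.start)
        {q | q.1 ∈ M₁.accept ∨ q.2 ∈ M₂.accept}).evalFrom p w
        = (M₁.evalFrom p.1 w, M₂.evalFrom p.2 w) := by
    intro w
    induction w with
    | nil => intro p; rfl
    | cons a t ih => intro p; simpa [DFA.evalFrom] using ih _
  ext w
  simp only [DFA.mem_accepts, DFA.eval, key, Language.add_def, Set.mem_union, Set.mem_setOf_eq]
  rfl

lemma isRegular_char (a : α) : ({[a]} : Language α).IsRegular := by
  classical
  refine ⟨Option Bool, inferInstance,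
    ⟨fun q b => match q with
      | some false => if b = a then some true else none
      | _ => none, some false, {some true}⟩, ?_⟩
  set M : DFA α (Option Bool) :=
    ⟨fun q b => match q with
      | some false => if b = a then some true else none
      | _ => none, some false, {some true}⟩ with hM
  have hnone : ∀ (t : List α), M.evalFrom none t = none := by
    intro t
    induction t with
    | nil => rfl
    | cons b t ih => simpa [DFA.evalFrom, hM] using ih
  have hmem : ∀ w : List α, w ∈ ({[a]} : Language α) ↔ w = [a] := fun w => Iff.rfl
  ext w
  rw [DFA.mem_accepts, hmem]
  cases w with
  | nil => simp [DFA.eval, hM]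
  | cons b t =>
    cases t with
    | nil =>
      by_cases hb : b = a <;> simp [DFA.eval, DFA.evalFrom, hM, hb]
    | cons c t' =>
      by_cases hb : b = a <;>
        · simp only [DFA.eval, DFA.evalFrom, List.foldl_cons, hM, hb]
          have h := hnone t'
          simp only [DFA.evalFrom, hM] at h
          simp [h, hb]

/-- NFA for the concatenation of two DFA languages. -/
def concatNFA (M₁ : DFA α σ₁) (M₂ : DFA α σ₂) : NFA α (σ₁ ⊕ σ₂) where
  step p a := match p with
    | Sum.inl q => {x | x = Sum.inl (M₁.step q a) ∨
        (x = Sum.inr (M₂.step M₂.start a) ∧ q ∈ M₁.accept)}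
    | Sum.inr q => {x | x = Sum.inr (M₂.step q a)}
  start := {x | x = Sum.inl M₁.start ∨ (x = Sum.inr M₂.start ∧ M₁.start ∈ M₁.accept)}
  accept := {x | (∃ q ∈ M₂.accept, x = Sum.inr q) ∨
      (∃ q ∈ M₁.accept, x = Sum.inl q ∧ M₂.start ∈ M₂.accept)}

lemma concat_eval (M₁ : DFA α σ₁) (M₂ : DFA α σ₂) (w : List α) :
    (∀ q, Sum.inl q ∈ (concatNFA M₁ M₂).eval w ↔ q = M₁.eval w) ∧
    (∀ q, Sum.inr q ∈ (concatNFA M₁ M₂).eval w ↔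
      ((∃ u v, w = u ++ v ∧ v ≠ [] ∧ u ∈ M₁.accepts ∧ q = M₂.evalFrom M₂.start v) ∨
        (w = [] ∧ M₁.start ∈ M₁.accept ∧ q = M₂.start))) := by
  induction w using List.reverseRecOn with
  | nil =>
    rw [show (concatNFA M₁ M₂).eval [] = (concatNFA M₁ M₂).start from rfl]
    constructor
    · intro q
      simp [concatNFA, Set.mem_setOf_eq]
    · intro q
      simp only [concatNFA, Set.mem_setOf_eq]
      constructor
      · rintro (h | ⟨h, hacc⟩)
        · exact absurd h (by simp)
        · exact Or.inr ⟨by trivial, hacc, Sum.inr.inj h⟩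
      · rintro (⟨u, v, huv, hv, _, _⟩ | ⟨-, hacc, rfl⟩)
        · exact absurd huv.symm (by simp [hv])
        · exact Or.inr ⟨rfl, hacc⟩
  | append_singleton xs a ih =>
    obtain ⟨ihl, ihr⟩ := ih
    rw [NFA.eval_append_singleton]
    constructor
    · intro q
      rw [NFA.mem_stepSet]
      constructor
      · rintro ⟨t, ht, hstep⟩
        cases t with
        | inl p =>
          simp only [concatNFA, Set.mem_setOf_eq] at hstep
          rcases hstep with h | ⟨h, _⟩
          · rw [(ihl p).mp ht] at h
            rw [DFA.eval_append_singleton]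
            exact Sum.inl.inj h
          · exact absurd h (by simp)
        | inr p =>
          simp only [concatNFA, Set.mem_setOf_eq] at hstep
          exact absurd hstep (by simp)
      · rintro rfl
        refine ⟨Sum.inl (M₁.eval xs), (ihl _).mpr rfl, ?_⟩
        simp [concatNFA, Set.mem_setOf_eq]
    · intro q
      rw [NFA.mem_stepSet]
      constructor
      · rintro ⟨t, ht, hstep⟩
        cases t with
        | inl p =>
          simp only [concatNFA, Set.mem_setOf_eq] at hstep
          rcases hstep with h | ⟨h, hacc⟩
          · exact absurd h (by simp)
          · have hq : q = M₂.step M₂.start a := by simpa using h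
            have hp : p = M₁.eval xs := (ihl p).mp ht
            refine Or.inl ⟨xs, [a], by simp, by simp, ?_, by simp [hq]⟩
            rw [DFA.mem_accepts]
            rw [hp] at hacc
            exact hacc
        | inr p =>
          simp only [concatNFA, Set.mem_setOf_eq] at hstep
          have hq : q = M₂.step p a := by simpa using hstep
          rcases (ihr p).mp ht with ⟨u, v, huv, hv, hu, hpv⟩ | ⟨rfl, hacc, rfl⟩
          · refine Or.inl ⟨u, v ++ [a], by simp [huv], by simp, hu, ?_⟩
            rw [DFA.evalFrom_append_singleton, ← hpv, hq]
          · refine Or.inl ⟨[], [a], by simp, by simp, ?_, by simp [hq]⟩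
            rw [DFA.mem_accepts]
            exact hacc
      · rintro (⟨u, v, huv, hv, hu, hq⟩ | ⟨h, _⟩)
        · rcases List.eq_nil_or_concat v with rfl | ⟨v', b, rfl⟩
          · exact absurd rfl hv
          · simp only [List.concat_eq_append] at huv hv hq ⊢
            obtain ⟨huv', hab⟩ : xs = u ++ v' ∧ ([a] : List α) = [b] :=
              List.append_inj' (by simpa [List.append_assoc] using huv) rfl
            obtain rfl : b = a := by simpa using hab.symm
            rcases List.eq_nil_or_concat v' with rfl | hne
            · -- v = [a], u = xs
              have hu' : M₁.eval xs ∈ M₁.accept := by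
                rw [show xs = u by simpa using huv']
                exact hu
              refine ⟨Sum.inl (M₁.eval xs), (ihl _).mpr rfl, ?_⟩
              simp only [concatNFA, Set.mem_setOf_eq]
              exact Or.inr ⟨by simp [hq], hu'⟩
            · have hv' : v' ≠ [] := by rcases hne with ⟨l, c, rfl⟩; simp
              refine ⟨Sum.inr (M₂.evalFrom M₂.start v'), ?_, ?_⟩
              · exact (ihr _).mpr (Or.inl ⟨u, v', huv', hv', hu, rfl⟩)
              · simp only [concatNFA, Set.mem_setOf_eq]
                rw [hq, DFA.evalFrom_append_singleton]
        · exact absurd h (by simp)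

lemma concatNFA_accepts (M₁ : DFA α σ₁) (M₂ : DFA α σ₂) :
    (concatNFA M₁ M₂).accepts = M₁.accepts * M₂.accepts := by
  ext w
  obtain ⟨ihl, ihr⟩ := concat_eval M₁ M₂ w
  rw [Language.mem_mul]
  constructor
  · rintro ⟨x, hx, hxe⟩
    simp only [concatNFA, Set.mem_setOf_eq] at hx
    rcases hx with ⟨q, hq, rfl⟩ | ⟨q, hq, rfl, hs2⟩
    · rcases (ihr q).mp hxe with ⟨u, v, rfl, _, hu, hqe⟩ | ⟨rfl, hacc, rfl⟩
      · exact ⟨u, hu, v, by rwa [DFA.mem_accepts, DFA.eval, ← hqe], rfl⟩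
      · exact ⟨[], by rwa [DFA.mem_accepts], [], by rwa [DFA.mem_accepts], rfl⟩
    · have hqe := (ihl q).mp hxe
      subst hqe
      have : w ∈ M₁.accepts := (DFA.mem_accepts M₁).mpr hq
      exact ⟨w, this, [], by rwa [DFA.mem_accepts], by simp⟩
  · rintro ⟨u, hu, v, hv, rfl⟩
    rcases List.eq_nil_or_concat v with rfl | ⟨v', b, rfl⟩
    · refine ⟨Sum.inl (M₁.eval u), ?_, (ihl _).mpr (by simp)⟩
      simp only [concatNFA, Set.mem_setOf_eq]
      exact Or.inr ⟨M₁.eval u, by rwa [DFA.mem_accepts] at hu, rfl, by rwa [DFA.mem_accepts] at hv⟩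
    · simp only [List.concat_eq_append] at *
      refine ⟨Sum.inr (M₂.evalFrom M₂.start (v' ++ [b])), ?_, ?_⟩
      · simp only [concatNFA, Set.mem_setOf_eq]
        exact Or.inl ⟨_, by rwa [DFA.mem_accepts] at hv, rfl⟩
      · exact (ihr _).mpr (Or.inl ⟨u, v' ++ [b], rfl, by simp, hu, rfl⟩)

/-- NFA for the Kleene star of a DFA language. -/
def starNFA (M : DFA α σ) : NFA α (Option σ) where
  step p a := match p with
    | none => {x | x = some (M.step M.start a)}
    | some q => {x | x = some (M.step q a) ∨
        (x = some (M.step M.start a) ∧ q ∈ M.accept)}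
  start := {x | x = none}
  accept := {x | x = none ∨ ∃ q ∈ M.accept, x = some q}

lemma append_mem_kstar {L : Language α} {u v : List α} (hu : u ∈ L∗) (hv : v ∈ L) :
    u ++ v ∈ L∗ := by
  obtain ⟨S, rfl, hS⟩ := Language.mem_kstar.mp hu
  refine Language.mem_kstar.mpr ⟨S ++ [v], by simp, ?_⟩
  intro y hy
  rcases List.mem_append.mp hy with h | h
  · exact hS y h
  · simp only [List.mem_singleton] at h
    subst h; exact hv

lemma star_decomp {L : Language α} : ∀ (S : List (List α)), (∀ y ∈ S, y ∈ L) →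
    S.flatten ≠ [] → ∃ u v, u ∈ L∗ ∧ v ∈ L ∧ v ≠ [] ∧ S.flatten = u ++ v := by
  intro S
  induction S using List.reverseRecOn with
  | nil => intro _ h; simp at h
  | append_singleton T y ih =>
    intro hmem hne
    rcases List.eq_nil_or_concat y with rfl | ⟨y', b, rfl⟩
    · have h1 : (∀ z ∈ T, z ∈ L) := fun z hz => hmem z (by simp [hz])
      have h2 : T.flatten ≠ [] := by simpa using hne
      obtain ⟨u, v, hu, hv, hvne, heq⟩ := ih h1 h2
      exact ⟨u, v, hu, hv, hvne, by simpa using heq⟩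
    · refine ⟨T.flatten, y'.concat b, ?_, hmem _ (by simp), by simp, by simp⟩
      exact Language.join_mem_kstar (fun z hz => hmem z (by simp [hz]))

lemma star_eval (M : DFA α σ) (w : List α) :
    (none ∈ (starNFA M).eval w ↔ w = []) ∧
    (∀ q, some q ∈ (starNFA M).eval w ↔
      ∃ u v, w = u ++ v ∧ v ≠ [] ∧ u ∈ M.accepts∗ ∧ q = M.evalFrom M.start v) := by
  induction w using List.reverseRecOn with
  | nil =>
    rw [show (starNFA M).eval [] = (starNFA M).start from rfl]
    constructor
    · simp [starNFA]
    · intro q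
      simp only [starNFA, Set.mem_setOf_eq]
      constructor
      · intro h; cases h
      · rintro ⟨u, v, huv, hv, -, -⟩
        exact absurd huv.symm (by simp [hv])
  | append_singleton xs a ih =>
    obtain ⟨ihn, ihs⟩ := ih
    rw [NFA.eval_append_singleton]
    constructor
    · rw [NFA.mem_stepSet]
      constructor
      · rintro ⟨t, ht, hstep⟩
        cases t <;> simp only [starNFA, Set.mem_setOf_eq] at hstep
        · cases hstep
        · rcases hstep with h | ⟨h, -⟩ <;> cases h
      · intro h; exact absurd h (by simp)
    · intro q
      rw [NFA.mem_stepSet]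
      constructor
      · rintro ⟨t, ht, hstep⟩
        cases t with
        | none =>
          simp only [starNFA, Set.mem_setOf_eq] at hstep
          obtain rfl : xs = [] := ihn.mp ht
          obtain rfl : q = M.step M.start a := Option.some.inj hstep
          exact ⟨[], [a], by simp, by simp, by simp [Language.nil_mem_kstar], by simp⟩
        | some p =>
          simp only [starNFA, Set.mem_setOf_eq] at hstep
          obtain ⟨u, v, rfl, hvne, hu, rfl⟩ := (ihs p).mp ht
          rcases hstep with h | ⟨h, hacc⟩
          · obtain rfl : q = M.step (M.evalFrom M.start v) a := Option.some.inj h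
            exact ⟨u, v ++ [a], by simp, by simp, hu, by simp⟩
          · obtain rfl : q = M.step M.start a := Option.some.inj h
            have hv : v ∈ M.accepts := (DFA.mem_accepts M).mpr hacc
            have huv : u ++ v ∈ M.accepts∗ := append_mem_kstar hu hv
            exact ⟨u ++ v, [a], by simp, by simp, huv, by simp⟩
      · rintro ⟨u, v, huv, hvne, hu, rfl⟩
        rcases List.eq_nil_or_concat v with rfl | ⟨v', b, rfl⟩
        · exact absurd rfl hvne
        · simp only [List.concat_eq_append] at huv ⊢
          obtain ⟨huv', hab⟩ : xs = u ++ v' ∧ ([a] : List α) = [b] :=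
            List.append_inj' (by simpa [List.append_assoc] using huv) rfl
          obtain rfl : b = a := by simpa using hab.symm
          rcases List.eq_nil_or_concat v' with rfl | hne
          · -- v = [a], u = xs ∈ L∗
            obtain rfl : xs = u := by simpa using huv'
            rcases List.eq_nil_or_concat xs with rfl | hne2
            · exact ⟨none, ihn.mpr rfl, by simp [starNFA]⟩
            · have hxs : xs ≠ [] := by rcases hne2 with ⟨l, c, rfl⟩; simp
              obtain ⟨S, hjoin, hS⟩ := Language.mem_kstar.mp hu
              obtain ⟨u', v'', hu', hv'', hvne'', heq⟩ := star_decomp S hS (by rw [← hjoin]; exact hxs)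
              rw [← hjoin] at heq
              refine ⟨some (M.evalFrom M.start v''), (ihs _).mpr ⟨u', v'', heq, hvne'', hu', rfl⟩, ?_⟩
              simp only [starNFA, Set.mem_setOf_eq]
              refine Or.inr ⟨by simp, ?_⟩
              exact (DFA.mem_accepts M).mp hv''
          · have hv' : v' ≠ [] := by rcases hne with ⟨l, c, rfl⟩; simp
            refine ⟨some (M.evalFrom M.start v'), (ihs _).mpr ⟨u, v', huv', hv', hu, rfl⟩, ?_⟩
            simp only [starNFA, Set.mem_setOf_eq]
            exact Or.inl (by simp)

lemma starNFA_accepts (M : DFA α σ) : (starNFA M).accepts = M.accepts∗ := by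
  ext w
  obtain ⟨ihn, ihs⟩ := star_eval M w
  constructor
  · rintro ⟨x, hx, hxe⟩
    simp only [starNFA, Set.mem_setOf_eq] at hx
    rcases hx with rfl | ⟨q, hq, rfl⟩
    · obtain rfl := ihn.mp hxe
      exact Language.nil_mem_kstar _
    · obtain ⟨u, v, rfl, hvne, hu, rfl⟩ := (ihs q).mp hxe
      exact append_mem_kstar hu ((DFA.mem_accepts M).mpr hq)
  · intro hw
    rcases List.eq_nil_or_concat w with rfl | hne
    · exact ⟨none, by simp [starNFA], ihn.mpr rfl⟩
    · have hwne : w ≠ [] := by rcases hne with ⟨l, c, rfl⟩; simp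
      obtain ⟨S, hjoin, hS⟩ := Language.mem_kstar.mp hw
      obtain ⟨u, v, hu, hv, hvne, heq⟩ := star_decomp S hS (by rw [← hjoin]; exact hwne)
      rw [← hjoin] at heq
      refine ⟨some (M.evalFrom M.start v), ?_, (ihs _).mpr ⟨u, v, heq, hvne, hu, rfl⟩⟩
      simp only [starNFA, Set.mem_setOf_eq]
      exact Or.inr ⟨_, (DFA.mem_accepts M).mp hv, rfl⟩

lemma isRegular_mul {L M : Language α} (hL : L.IsRegular) (hM : M.IsRegular) :
    (L * M).IsRegular := by
  obtain ⟨σ₁', _, M₁, rfl⟩ := hL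
  obtain ⟨σ₂', _, M₂, rfl⟩ := hM
  rw [← concatNFA_accepts]
  exact nfa_isRegular _

lemma isRegular_kstar {L : Language α} (hL : L.IsRegular) : (L∗).IsRegular := by
  obtain ⟨σ', _, M, rfl⟩ := hL
  rw [← starNFA_accepts]
  exact nfa_isRegular _

lemma mem_lang_singleton {w x : List α} : x ∈ ({w} : Language α) ↔ x = w := Iff.rfl

lemma lang_finite_mul {L M : Language α} (hL : L.Finite) (hM : M.Finite) : (L * M).Finite := by
  rw [Language.mul_def]; exact hL.image2 _ hM

lemma singleton_isRegular (w : List α) : ({w} : Language α).IsRegular := by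
  induction w with
  | nil => exact Language.one_def ▸ isRegular_one
  | cons a t ih =>
    have h : ({a :: t} : Language α) = {[a]} * {t} := by
      ext x
      simp only [Language.mem_mul, mem_lang_singleton]
      constructor
      · rintro rfl; exact ⟨[a], rfl, t, rfl, rfl⟩
      · rintro ⟨u, rfl, v, rfl, rfl⟩; rfl
    rw [h]
    exact isRegular_mul (isRegular_char a) ih

lemma finite_isRegular {L : Language α} (h : L.Finite) : L.IsRegular := by
  refine Set.Finite.induction_on (motive := fun s _ => Language.IsRegular (s : Language α)) L h ?_ ?_
  · exact isRegular_zero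
  · intro a s _ _ ih
    show Language.IsRegular (insert a s)
    have h2 : (insert a s : Language α) = ({a} : Language α) + (show Language α from s) :=
      Set.insert_eq a s
    rw [h2]
    exact isRegular_add (singleton_isRegular a) ih

lemma regex_isRegular (r : RegularExpression α) : r.matches'.IsRegular := by
  induction r with
  | zero => exact RegularExpression.matches'_zero ▸ isRegular_zero
  | epsilon => exact RegularExpression.matches'_epsilon ▸ isRegular_one
  | char a => exact RegularExpression.matches'_char a ▸ isRegular_char a
  | plus r s ihr ihs => exact RegularExpression.matches'_add r s ▸ isRegular_add ihr ihs
  | comp r s ihr ihs => exact RegularExpression.matches'_mul r s ▸ isRegular_mul ihr ihs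
  | star r ih => exact RegularExpression.matches'_star r ▸ isRegular_kstar ih

lemma key (r : RegularExpression α) : r.UnionFree →
    ∀ F G H : Language α, F.Finite → G.IsRegular → H.IsRegular → G ≠ 0 → G ≠ 1 →
    ∃ E' G' H' : Language α, E'.Finite ∧ G'.IsRegular ∧ H'.IsRegular ∧ G' ≠ 0 ∧ G' ≠ 1 ∧
      r.matches' * (F * (G∗ * H)) = E' * G'∗ * H' := by
  induction r with
  | zero =>
    intro _ F G H _ hG hH hG0 hG1
    refine ⟨0, G, H, Set.finite_empty, hG, hH, hG0, hG1, ?_⟩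
    show (0 : Language α) * (F * (G∗ * H)) = 0 * G∗ * H
    rw [zero_mul, zero_mul, zero_mul]
  | epsilon =>
    intro hr
    simp [RegularExpression.UnionFree] at hr
  | char a =>
    intro _ F G H hF hG hH hG0 hG1
    refine ⟨{[a]} * F, G, H, ?_, hG, hH, hG0, hG1, ?_⟩
    · exact lang_finite_mul (Set.finite_singleton _) hF
    · show ({[a]} : Language α) * (F * (G∗ * H)) = {[a]} * F * G∗ * H
      rw [← mul_assoc, ← mul_assoc]
  | plus r s ihr ihs =>
    intro hr
    simp [RegularExpression.UnionFree] at hr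
  | comp r₁ r₂ ih₁ ih₂ =>
    rintro ⟨hr₁, hr₂⟩ F G H hF hG hH hG0 hG1
    obtain ⟨E₂, G₂, H₂, hE₂, hG₂, hH₂, hG₂0, hG₂1, heq₂⟩ := ih₂ hr₂ F G H hF hG hH hG0 hG1
    obtain ⟨E', G', H', h1, h2, h3, h4, h5, heq₁⟩ := ih₁ hr₁ E₂ G₂ H₂ hE₂ hG₂ hH₂ hG₂0 hG₂1
    refine ⟨E', G', H', h1, h2, h3, h4, h5, ?_⟩
    show r₁.matches' * r₂.matches' * (F * (G∗ * H)) = E' * G'∗ * H'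
    rw [mul_assoc, heq₂, mul_assoc, heq₁]
  | star u ihu =>
    intro _ F G H hF hG hH hG0 hG1
    by_cases h0 : u.matches' = 0
    · refine ⟨F, G, H, hF, hG, hH, hG0, hG1, ?_⟩
      show u.matches'∗ * (F * (G∗ * H)) = F * G∗ * H
      rw [h0, kstar_zero, one_mul, ← mul_assoc]
    by_cases h1 : u.matches' = 1
    · refine ⟨F, G, H, hF, hG, hH, hG0, hG1, ?_⟩
      show u.matches'∗ * (F * (G∗ * H)) = F * G∗ * H
      rw [h1, kstar_one, one_mul, ← mul_assoc]
    refine ⟨1, u.matches', F * (G∗ * H), ?_, regex_isRegular u, ?_, h0, h1, ?_⟩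
    · rw [Language.one_def]; exact Set.finite_singleton _
    · exact isRegular_mul (finite_isRegular hF) (isRegular_mul (isRegular_kstar hG) hH)
    · show u.matches'∗ * (F * (G∗ * H)) = 1 * u.matches'∗ * (F * (G∗ * H))
      rw [one_mul]

end CometAux

/-- A two-sided comet whose first tail is union-free has a representation with finite first tail. -/
theorem twoComet_unionFree_to_finite_tail [Fintype α] (L E G H : Language α)
    (hE : IsUnionFree E) (hG : G.IsRegular) (hH : H.IsRegular)
    (hG0 : G ≠ 0) (hG1 : G ≠ 1) (hL : L = E * G∗ * H) :
    ∃ E' G' H' : Language α, E'.Finite ∧ G'.IsRegular ∧ H'.IsRegular ∧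
      G' ≠ 0 ∧ G' ≠ 1 ∧ L = E' * G'∗ * H' := by
  obtain ⟨r, hr, hrE⟩ := hE
  obtain ⟨E', G', H', h1, h2, h3, h4, h5, heq⟩ :=
    CometAux.key r hr 1 G H (by rw [Language.one_def]; exact Set.finite_singleton _) hG hH hG0 hG1
  refine ⟨E', G', H', h1, h2, h3, h4, h5, ?_⟩
  rw [hL]
  calc E * G∗ * H = r.matches' * (1 * (G∗ * H)) := by rw [← hrE, mul_assoc, one_mul]
    _ = E' * G'∗ * H' := heq
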